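/- Let p, q > 0 with p^(-l) ≠ q^l, let α, β, l be real with α ≠ 0 and k := l/α, and let f : ℝ → ℝ be differentiable. Then for every z > 0, the operators N = α z d/dz and a = D satisfy [N, a] f (z) = −l · (D f)(z); explicitly, α · z · (d/dz)[(f(p^(-α) w) p^(-β) − f(q^(α) w) q^(β)) / ((p^(-l) − q^l) w^k)]|_{w=z} − (p^(-β) · α · (p^(-α) z) · f′(p^(-α) z) − q^(β) · α · (q^(α) z) · f′(q^(α) z)) / ((p^(-l) − q^l) z^k) = −l · (f(p^(-α) z) p^(-β) − f(q^(α) z) q^(β)) / ((p^(-l) − q^l) z^k), where z^k denotes the real power. -/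

import Mathlib

/-- The commutation relation `[N, a] f = -l · (D f)` for the number operator
`N = α z d/dz` and the annihilation operator `a = D`, the `(p,q;α,β,l)`-difference
derivative. -/
theorem commutator_N_a (p q α β l : ℝ) (hp : 0 < p) (hq : 0 < q)
    (hα : α ≠ 0) (h : p ^ (-l) ≠ q ^ l) (k : ℝ) (hk : k = l / α)
    (f : ℝ → ℝ) (hf : Differentiable ℝ f) (z : ℝ) (hz : 0 < z) :
    α * z * deriv (fun w =>
        (f (p ^ (-α) * w) * p ^ (-β) - f (q ^ α * w) * q ^ β) /
          ((p ^ (-l) - q ^ l) * w ^ k)) z -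
      (p ^ (-β) * α * (p ^ (-α) * z) * deriv f (p ^ (-α) * z) -
          q ^ β * α * (q ^ α * z) * deriv f (q ^ α * z)) /
        ((p ^ (-l) - q ^ l) * z ^ k) =
    -l * ((f (p ^ (-α) * z) * p ^ (-β) - f (q ^ α * z) * q ^ β) /
        ((p ^ (-l) - q ^ l) * z ^ k)) := by
  set A := p ^ (-α) with hA
  set B := q ^ α with hB
  have hC : p ^ (-l) - q ^ l ≠ 0 := sub_ne_zero.mpr h
  have hzk : z ^ k ≠ 0 := (Real.rpow_pos_of_pos hz k).ne'
  -- derivative of numerator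
  have h1 : HasDerivAt (fun w => f (A * w)) (deriv f (A * z) * A) z := by
    have := (hf (A * z)).hasDerivAt.comp z ((hasDerivAt_id z).const_mul A)
    simpa [Function.comp_def] using this
  have h2 : HasDerivAt (fun w => f (B * w)) (deriv f (B * z) * B) z := by
    have := (hf (B * z)).hasDerivAt.comp z ((hasDerivAt_id z).const_mul B)
    simpa [Function.comp_def] using this
  have hnum : HasDerivAt (fun w => f (A * w) * p ^ (-β) - f (B * w) * q ^ β)
      (deriv f (A * z) * A * p ^ (-β) - deriv f (B * z) * B * q ^ β) z :=
    (h1.mul_const _).sub (h2.mul_const _)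
  have hrpow : HasDerivAt (fun w : ℝ => w ^ k) (k * z ^ (k - 1)) z :=
    Real.hasDerivAt_rpow_const (Or.inl hz.ne')
  have hden : HasDerivAt (fun w : ℝ => (p ^ (-l) - q ^ l) * w ^ k)
      ((p ^ (-l) - q ^ l) * (k * z ^ (k - 1))) z := hrpow.const_mul _
  have hdenne : (p ^ (-l) - q ^ l) * z ^ k ≠ 0 := mul_ne_zero hC hzk
  have hdiv : deriv (fun w => (f (A * w) * p ^ (-β) - f (B * w) * q ^ β) / ((p ^ (-l) - q ^ l) * w ^ k)) z = _ :=
    (hnum.div hden hdenne).deriv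
  rw [hdiv]
  have hzk1 : z ^ (k - 1) = z ^ k / z := Real.rpow_sub_one hz.ne' k
  have hl : l = k * α := by rw [hk]; field_simp
  rw [hzk1]
  set c := p ^ (-l) - q ^ l with hc
  set y := z ^ k with hy
  rw [hl]
  field_simp
  ring
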